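/- arXiv:1510.05051 — 3 statements merged into one kernel-verified Lean document; each statement's English description precedes it below -/
import Mathlib

section
/- Let a, b be real numbers and λ = ρ e^{iφ} a complex number with ρ > 0, φ ∈ (-π, π), and b ≥ 0. Then |1 - i√(2λ) a + 2λ b|^{-1} ≤ 1/cos(φ/2), where √λ denotes the principal square root. -/
open Complex Real

theorem resolvent_bound (a b ρ φ : ℝ) (hρ : 0 < ρ) (hφ : φ ∈ Set.Ioo (-Real.pi) Real.pi)
    (hb : 0 ≤ b) (lam : ℂ) (hlam : lam = (ρ : ℂ) * Complex.exp (Complex.I * (φ : ℂ))) :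
    ‖1 - Complex.I * (2 * lam) ^ ((1 : ℂ)/2) * (a : ℂ) + 2 * lam * (b : ℂ)‖⁻¹
      ≤ 1 / Real.cos (φ / 2) := by
  obtain ⟨hφ1, hφ2⟩ := hφ
  have hcos : 0 < Real.cos (φ / 2) := by
    apply Real.cos_pos_of_mem_Ioo
    constructor <;> [linarith; linarith]
  have h2ρ : (0:ℝ) < 2 * ρ := by linarith
  have h2lam : 2 * lam = ((2*ρ : ℝ) : ℂ) * (Complex.cos (φ:ℂ) + Complex.sin (φ:ℂ) * Complex.I) := by
    rw [hlam, mul_comm Complex.I (φ:ℂ), Complex.exp_mul_I]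
    push_cast
    ring
  have hne : 2 * lam ≠ 0 := by
    rw [h2lam]
    apply mul_ne_zero
    · exact_mod_cast h2ρ.ne'
    · intro h
      have := congrArg norm h
      rw [Complex.norm_cos_add_sin_mul_I] at this
      simp at this
  have habs : ‖2 * lam‖ = 2 * ρ := by
    rw [h2lam, norm_mul, Complex.norm_cos_add_sin_mul_I, Complex.norm_of_nonneg h2ρ.le,
      mul_one]
  have harg : Complex.arg (2 * lam) = φ := by
    rw [h2lam]
    exact Complex.arg_mul_cos_add_sin_mul_I h2ρ ⟨hφ1, le_of_lt hφ2⟩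
  have hlog : Complex.log (2 * lam) = (Real.log (2*ρ) : ℂ) + (φ : ℂ) * Complex.I := by
    rw [Complex.log, habs, harg]
  have hsqrt : Real.exp (Real.log (2*ρ) / 2) = Real.sqrt (2*ρ) := by
    rw [Real.sqrt_eq_rpow, Real.rpow_def_of_pos h2ρ]
    ring_nf
  have hw : (2 * lam) ^ ((1 : ℂ)/2)
      = (Real.sqrt (2*ρ) : ℂ) * Complex.exp (Complex.I * ((φ/2 : ℝ) : ℂ)) := by
    rw [Complex.cpow_def_of_ne_zero hne, hlog]
    rw [show ((Real.log (2*ρ) : ℂ) + (φ : ℂ) * Complex.I) * ((1:ℂ)/2)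
        = ((Real.log (2*ρ) / 2 : ℝ) : ℂ) + Complex.I * ((φ/2 : ℝ) : ℂ) by push_cast; ring]
    rw [Complex.exp_add, ← Complex.ofReal_exp, hsqrt]
  set z : ℂ := 1 - Complex.I * (2 * lam) ^ ((1 : ℂ)/2) * (a : ℂ) + 2 * lam * (b : ℂ) with hz
  have key : Real.cos (φ / 2) ≤ ‖z‖ := by
    have hre : (z * Complex.exp (-Complex.I * ((φ/2 : ℝ) : ℂ))).re
        = Real.cos (φ/2) * (1 + 2 * ρ * b) := by
      rw [hz, hw, h2lam]
      rw [show -Complex.I * ((φ/2 : ℝ) : ℂ) = ((-(φ/2) : ℝ) : ℂ) * Complex.I by push_cast; ring]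
      rw [show Complex.I * ((φ/2 : ℝ) : ℂ) = ((φ/2 : ℝ) : ℂ) * Complex.I by ring]
      rw [Complex.exp_mul_I, Complex.exp_mul_I]
      simp only [Complex.add_re, Complex.sub_re, Complex.mul_re, Complex.mul_im,
        Complex.add_im, Complex.sub_im, Complex.one_re, Complex.one_im, Complex.I_re,
        Complex.I_im, Complex.ofReal_re, Complex.ofReal_im, Complex.cos_ofReal_re,
        Complex.cos_ofReal_im, Complex.sin_ofReal_re, Complex.sin_ofReal_im,
        Real.cos_neg, Real.sin_neg]
      have hsc := Real.sin_sq_add_cos_sq (φ/2)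
      have hc : Real.cos φ = Real.cos (φ/2)^2 - Real.sin (φ/2)^2 := by
        have h1 : Real.cos φ = 2 * Real.cos (φ/2)^2 - 1 := by
          rw [← Real.cos_two_mul]; ring_nf
        linarith
      have hs : Real.sin φ = 2 * Real.sin (φ/2) * Real.cos (φ/2) := by
        rw [← Real.sin_two_mul]; ring_nf
      rw [hc, hs]
      linear_combination (2 * ρ * Real.cos (φ/2) * b) * hsc
    calc Real.cos (φ / 2) ≤ Real.cos (φ/2) * (1 + 2 * ρ * b) := by nlinarith [mul_nonneg hcos.le (mul_nonneg h2ρ.le hb)]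
      _ = (z * Complex.exp (-Complex.I * ((φ/2 : ℝ) : ℂ))).re := hre.symm
      _ ≤ ‖z * Complex.exp (-Complex.I * ((φ/2 : ℝ) : ℂ))‖ := Complex.re_le_norm _
      _ = ‖z‖ := by
          rw [norm_mul, show -Complex.I * ((φ/2 : ℝ) : ℂ) = ((-(φ/2) : ℝ) : ℂ) * Complex.I by
            push_cast; ring, Complex.norm_exp_ofReal_mul_I, mul_one]
  rw [one_div]
  exact inv_anti₀ hcos key
end

section
/- For every integer n ≥ 2, the number of labeled trees on n vertices with prescribed vertex degrees c_1, ..., c_n (each c_i ≥ 1, Σ c_i = 2n-2) is (n-2)! / Π_i (c_i - 1)!. -/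
open Finset SimpleGraph Fin

namespace CayleyAux

variable {V : Type*}

/-- L1 -/
lemma exists_adj_of_reachable {G : SimpleGraph V} {u v : V} (h : G.Reachable u v)
    (hne : u ≠ v) : ∃ z, G.Adj u z := by
  obtain ⟨p⟩ := h
  cases p with
  | nil => exact absurd rfl hne
  | cons h p => exact ⟨_, h⟩

/-- L3: an interior vertex of a path has two distinct neighbors. -/
lemma two_nbrs_of_interior {G : SimpleGraph V} {x y v : V} [DecidableEq V]
    (p : G.Walk x y) (hp : p.IsPath) (hv : v ∈ p.support) (hvx : v ≠ x) (hvy : v ≠ y) :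
    ∃ a b, a ≠ b ∧ G.Adj v a ∧ G.Adj v b := by
  set t := p.takeUntil v hv with ht
  set q := p.dropUntil v hv with hq
  have hspec : t.append q = p := p.take_spec hv
  have hnodup : (t.support ++ q.support.tail).Nodup := by
    have := hp.support_nodup
    rwa [← hspec, Walk.support_append] at this
  have hqn : ¬ q.Nil := Walk.not_nil_of_ne hvy
  have htn : ¬ t.reverse.Nil := Walk.not_nil_of_ne hvx
  obtain ⟨a, ha, q', hq'⟩ := Walk.not_nil_iff.mp hqn
  obtain ⟨b, hb, t', ht'⟩ := Walk.not_nil_iff.mp htn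
  refine ⟨a, b, ?_, ha, hb⟩
  have hat : a ∈ q.support.tail := by
    rw [hq', Walk.support_cons, List.tail_cons]
    exact q'.start_mem_support
  have hbt : b ∈ t.support := by
    have : b ∈ t.reverse.support := by
      rw [ht', Walk.support_cons]
      exact List.mem_cons_of_mem _ t'.start_mem_support
    rwa [Walk.support_reverse, List.mem_reverse] at this
  rintro rfl
  exact (List.disjoint_of_nodup_append hnodup) hbt hat

/-- L4 -/
lemma not_mem_support_of_unique_nbr {G : SimpleGraph V} {x y v w : V} [DecidableEq V]
    (p : G.Walk x y) (hp : p.IsPath) (hw : ∀ z, G.Adj v z ↔ z = w)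
    (hvx : v ≠ x) (hvy : v ≠ y) : v ∉ p.support := by
  intro hv
  obtain ⟨a, b, hab, ha, hb⟩ := two_nbrs_of_interior p hp hv hvx hvy
  rw [hw] at ha hb
  exact hab (ha.trans hb.symm)

/-- L5: reachability descends along castSucc when the walk avoids `last`. -/
lemma reachable_comap_castSucc {n : ℕ} {G : SimpleGraph (Fin (n + 1))} :
    ∀ {x y : Fin (n + 1)} (p : G.Walk x y), (∀ z ∈ p.support, z ≠ Fin.last n) →
    ∀ (hx : x ≠ Fin.last n) (hy : y ≠ Fin.last n),
      (G.comap (Fin.castSucc : Fin n → Fin (n + 1))).Reachable (x.castPred hx) (y.castPred hy) := by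
  intro x y p
  induction p with
  | nil => intro _ hx hy; rfl
  | @cons u u' y h p ih =>
    intro hs hx hy
    have hu' : u' ≠ Fin.last n := hs _ (by simp)
    refine Reachable.trans (Adj.reachable ?_) (ih (fun z hz => hs z (by simp [hz])) hu' hy)
    show G.Adj (Fin.castSucc (u.castPred hx)) (Fin.castSucc (u'.castPred hu'))
    rwa [Fin.castSucc_castPred, Fin.castSucc_castPred]

end CayleyAux

namespace CayleyAux

lemma cs_ne_last {n : ℕ} (j : Fin n) : Fin.castSucc j ≠ Fin.last n :=
  (Fin.castSucc_lt_last j).ne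

/-- adding a leaf `last n` attached to `castSucc j`. -/
def addLeaf {n : ℕ} (H : SimpleGraph (Fin n)) (j : Fin n) : SimpleGraph (Fin (n + 1)) where
  Adj x y := (∃ a b, H.Adj a b ∧ x = Fin.castSucc a ∧ y = Fin.castSucc b) ∨
    (x = Fin.last n ∧ y = Fin.castSucc j) ∨ (y = Fin.last n ∧ x = Fin.castSucc j)
  symm := by
    constructor
    rintro x y (⟨a, b, hab, rfl, rfl⟩ | ⟨rfl, rfl⟩ | ⟨rfl, rfl⟩)
    · exact Or.inl ⟨b, a, hab.symm, rfl, rfl⟩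
    · exact Or.inr (Or.inr ⟨rfl, rfl⟩)
    · exact Or.inr (Or.inl ⟨rfl, rfl⟩)
  loopless := by
    constructor
    rintro x (⟨a, b, hab, rfl, h⟩ | ⟨rfl, h⟩ | ⟨h, h'⟩)
    · exact hab.ne (Fin.castSucc_injective _ h)
    · exact cs_ne_last j h.symm
    · exact cs_ne_last j (h'.symm.trans h)

lemma addLeaf_adj_cs {n : ℕ} {H : SimpleGraph (Fin n)} {j a b : Fin n} :
    (addLeaf H j).Adj (Fin.castSucc a) (Fin.castSucc b) ↔ H.Adj a b := by
  constructor
  · rintro (⟨a', b', hab, ha, hb⟩ | ⟨h, _⟩ | ⟨h, _⟩)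
    · rwa [Fin.castSucc_injective _ ha, Fin.castSucc_injective _ hb]
    · exact absurd h (cs_ne_last a)
    · exact absurd h (cs_ne_last b)
  · exact fun h => Or.inl ⟨a, b, h, rfl, rfl⟩

lemma addLeaf_comap {n : ℕ} (H : SimpleGraph (Fin n)) (j : Fin n) :
    (addLeaf H j).comap (Fin.castSucc : Fin n → Fin (n + 1)) = H := by
  ext a b
  exact addLeaf_adj_cs

lemma addLeaf_adj_last {n : ℕ} {H : SimpleGraph (Fin n)} {j : Fin n} {z : Fin (n + 1)} :
    (addLeaf H j).Adj (Fin.last n) z ↔ z = Fin.castSucc j := by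
  constructor
  · rintro (⟨a, b, _, ha, _⟩ | ⟨_, rfl⟩ | ⟨rfl, h⟩)
    · exact absurd ha.symm (cs_ne_last a)
    · rfl
    · exact (cs_ne_last j h.symm).elim
  · rintro rfl
    exact Or.inr (Or.inl ⟨rfl, rfl⟩)

end CayleyAux

namespace CayleyAux

/-- L8a -/
lemma nbr_ncard_comap_of_not_adj_last {n : ℕ} {G : SimpleGraph (Fin (n + 1))} {k : Fin n}
    (h : ¬ G.Adj (Fin.castSucc k) (Fin.last n)) :
    {z | G.Adj (Fin.castSucc k) z}.ncard
      = {m | (G.comap (Fin.castSucc : Fin n → Fin (n + 1))).Adj k m}.ncard := by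
  have himg : {z | G.Adj (Fin.castSucc k) z}
      = (Fin.castSucc : Fin n → Fin (n + 1)) '' {m | G.Adj (Fin.castSucc k) (Fin.castSucc m)} := by
    ext z
    simp only [Set.mem_setOf_eq, Set.mem_image]
    constructor
    · intro hz
      have hzl : z ≠ Fin.last n := fun hzl => h (hzl ▸ hz)
      exact ⟨z.castPred hzl, by rwa [Fin.castSucc_castPred], by rw [Fin.castSucc_castPred]⟩
    · rintro ⟨m, hm, rfl⟩; exact hm
  rw [himg, Set.ncard_image_of_injective _ (Fin.castSucc_injective n)]
  rfl

/-- L8b -/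
lemma nbr_ncard_comap_of_adj_last {n : ℕ} {G : SimpleGraph (Fin (n + 1))} {k : Fin n}
    (h : G.Adj (Fin.castSucc k) (Fin.last n)) :
    {z | G.Adj (Fin.castSucc k) z}.ncard
      = {m | (G.comap (Fin.castSucc : Fin n → Fin (n + 1))).Adj k m}.ncard + 1 := by
  have himg : {z | G.Adj (Fin.castSucc k) z}
      = insert (Fin.last n)
        ((Fin.castSucc : Fin n → Fin (n + 1)) '' {m | G.Adj (Fin.castSucc k) (Fin.castSucc m)}) := by
    ext z
    simp only [Set.mem_setOf_eq, Set.mem_insert_iff, Set.mem_image]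
    constructor
    · intro hz
      by_cases hzl : z = Fin.last n
      · exact Or.inl hzl
      · exact Or.inr ⟨z.castPred hzl, by rwa [Fin.castSucc_castPred], by rw [Fin.castSucc_castPred]⟩
    · rintro (rfl | ⟨m, hm, rfl⟩)
      · exact h
      · exact hm
  have hnm : Fin.last n ∉
      (Fin.castSucc : Fin n → Fin (n + 1)) '' {m | G.Adj (Fin.castSucc k) (Fin.castSucc m)} := by
    rintro ⟨m, _, hm⟩
    exact cs_ne_last m hm
  rw [himg, Set.ncard_insert_of_notMem hnm (Set.toFinite _),
    Set.ncard_image_of_injective _ (Fin.castSucc_injective n)]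
  rfl

/-- L9: deleting a leaf from a tree gives a tree. -/
lemma comap_isTree {n : ℕ} (hn : 0 < n) {G : SimpleGraph (Fin (n + 1))} (hT : G.IsTree)
    {j : Fin n} (hleaf : ∀ z, G.Adj (Fin.last n) z ↔ z = Fin.castSucc j) :
    (G.comap (Fin.castSucc : Fin n → Fin (n + 1))).IsTree := by
  classical
  have : Nonempty (Fin n) := ⟨⟨0, hn⟩⟩
  constructor
  · constructor
    intro a b
    obtain ⟨p⟩ := hT.isConnected.preconnected (Fin.castSucc a) (Fin.castSucc b)
    obtain ⟨q, hq⟩ := p.toPath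
    have hnot : Fin.last n ∉ q.support :=
      not_mem_support_of_unique_nbr q hq hleaf (Ne.symm (cs_ne_last a)) (Ne.symm (cs_ne_last b))
    have := reachable_comap_castSucc q
      (fun z hz => fun hzl => hnot (hzl ▸ hz)) (cs_ne_last a) (cs_ne_last b)
    simpa using this
  · intro v c hc
    have hinj : Function.Injective (Fin.castSucc : Fin n → Fin (n + 1)) :=
      Fin.castSucc_injective n
    have := hc.map (f := SimpleGraph.Embedding.comap
      ⟨Fin.castSucc, hinj⟩ G |>.toHom) hinj
    exact hT.IsAcyclic _ this

/-- L10: adding a leaf to a tree gives a tree. -/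
lemma addLeaf_isTree {n : ℕ} {H : SimpleGraph (Fin n)} (hH : H.IsTree) (j : Fin n) :
    (addLeaf H j).IsTree := by
  classical
  have hhom : ∀ {a b : Fin n}, H.Adj a b →
      (addLeaf H j).Adj (Fin.castSucc a) (Fin.castSucc b) := fun h => addLeaf_adj_cs.mpr h
  have hreach : ∀ x : Fin (n + 1), (addLeaf H j).Reachable x (Fin.castSucc j) := by
    intro x
    by_cases hx : x = Fin.last n
    · subst hx
      exact (Adj.reachable (addLeaf_adj_last.mpr rfl))
    · have hr := hH.isConnected.preconnected (x.castPred hx) j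
      have := hr.map (G' := addLeaf H j) ⟨Fin.castSucc, fun h => hhom h⟩
      simpa using this
  constructor
  · exact ⟨fun x y => (hreach x).trans (hreach y).symm⟩
  · rw [isAcyclic_iff_forall_adj_isBridge]
    intro v w hvw
    rcases hvw with ⟨a, b, hab, rfl, rfl⟩ | ⟨rfl, rfl⟩ | ⟨rfl, rfl⟩
    · -- lifted edge
      rw [isBridge_iff]
      intro hre
      obtain ⟨p⟩ := hre
      set G' := addLeaf H j \ fromEdgeSet {s(Fin.castSucc a, Fin.castSucc b)} with hG'
      have hleaf' : ∀ z, G'.Adj (Fin.last n) z ↔ z = Fin.castSucc j := by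
        intro z
        rw [hG', sdiff_adj, fromEdgeSet_adj]
        constructor
        · rintro ⟨h1, _⟩; exact addLeaf_adj_last.mp h1
        · rintro rfl
          refine ⟨addLeaf_adj_last.mpr rfl, ?_⟩
          rintro ⟨h1, -⟩
          rw [Set.mem_singleton_iff, Sym2.eq_iff] at h1
          rcases h1 with ⟨h1, -⟩ | ⟨h2, -⟩
          · exact cs_ne_last a h1.symm
          · exact cs_ne_last b h2.symm
      obtain ⟨q, hq⟩ := p.toPath
      have hnot : Fin.last n ∉ q.support :=
        not_mem_support_of_unique_nbr q hq hleaf' (Ne.symm (cs_ne_last a)) (Ne.symm (cs_ne_last b))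
      have hre2 := reachable_comap_castSucc q
        (fun z hz => fun hzl => hnot (hzl ▸ hz)) (cs_ne_last a) (cs_ne_last b)
      simp only [Fin.castPred_castSucc] at hre2
      have hmono : G'.comap (Fin.castSucc : Fin n → Fin (n + 1)) ≤ H \ fromEdgeSet {s(a, b)} := by
        intro x y hxy
        obtain ⟨h1, h2⟩ := hxy
        rw [sdiff_adj, fromEdgeSet_adj]
        refine ⟨addLeaf_adj_cs.mp h1, ?_⟩
        rintro ⟨he, hne⟩
        apply h2
        rw [fromEdgeSet_adj]
        refine ⟨?_, fun hccs => hne (Fin.castSucc_injective n hccs)⟩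
        rw [Set.mem_singleton_iff, Sym2.eq_iff] at he
        rw [Set.mem_singleton_iff, Sym2.eq_iff]
        rcases he with ⟨rfl, rfl⟩ | ⟨rfl, rfl⟩
        · exact Or.inl ⟨rfl, rfl⟩
        · exact Or.inr ⟨rfl, rfl⟩
      have hre3 := hre2.mono hmono
      have hbr := (isAcyclic_iff_forall_adj_isBridge.mp hH.IsAcyclic) hab
      rw [isBridge_iff] at hbr
      exact hbr hre3
    · -- edge (last, castSucc j)
      rw [isBridge_iff]
      intro hre
      obtain ⟨z, hz⟩ := exists_adj_of_reachable hre (cs_ne_last j).symm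
      obtain ⟨h1, h2⟩ := hz
      have hzj := addLeaf_adj_last.mp h1
      subst hzj
      exact h2 (by rw [fromEdgeSet_adj]; exact ⟨rfl, (cs_ne_last j).symm⟩)
    · -- edge (castSucc j, last): use symmetry2
      rw [Sym2.eq_swap, isBridge_iff]
      intro hre
      obtain ⟨z, hz⟩ := exists_adj_of_reachable hre (cs_ne_last j).symm
      obtain ⟨h1, h2⟩ := hz
      have hzj := addLeaf_adj_last.mp h1
      subst hzj
      exact h2 (by rw [fromEdgeSet_adj]; exact ⟨rfl, (cs_ne_last j).symm⟩)

end CayleyAux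

namespace CayleyAux

lemma isTree_iff_of_iso {V W : Type*} {G : SimpleGraph V} {H : SimpleGraph W} (φ : G ≃g H) :
    G.IsTree ↔ H.IsTree := by
  rw [isTree_iff, isTree_iff, φ.connected_iff]
  refine and_congr_right fun _ => ⟨fun h v c hc => ?_, fun h v c hc => ?_⟩
  · exact h _ ((hc.map φ.symm.toEquiv.injective (f := φ.symm.toHom)))
  · exact h _ ((hc.map φ.toEquiv.injective (f := φ.toHom)))

lemma comap_equiv_isTree_iff {V W : Type*} {G : SimpleGraph W} (e : V ≃ W) :
    (G.comap ⇑e).IsTree ↔ G.IsTree :=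
  isTree_iff_of_iso (SimpleGraph.Iso.comap e G)

lemma ncard_nbr_comap_equiv {V W : Type*} {G : SimpleGraph W} (e : V ≃ W) (x : V) :
    {y | (G.comap ⇑e).Adj x y}.ncard = {y | G.Adj (e x) y}.ncard := by
  have h : {y | (G.comap ⇑e).Adj x y} = ⇑e ⁻¹' {y | G.Adj (e x) y} := rfl
  rw [h, ← Equiv.image_symm_eq_preimage, Set.ncard_image_of_injective _ e.symm.injective]

lemma ncard_trees_perm {n : ℕ} (e : Fin n ≃ Fin n) (c : Fin n → ℕ) :
    {G : SimpleGraph (Fin n) | G.IsTree ∧ ∀ i, {j | G.Adj i j}.ncard = c (e i)}.ncard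
      = {G : SimpleGraph (Fin n) | G.IsTree ∧ ∀ i, {j | G.Adj i j}.ncard = c i}.ncard := by
  have hinj : Function.Injective (fun G : SimpleGraph (Fin n) => G.comap ⇑e) := by
    intro G1 G2 h
    ext x y
    have := congrFun (congrFun (congrArg SimpleGraph.Adj h) (e.symm x)) (e.symm y)
    simpa [SimpleGraph.comap] using this
  have himg : (fun G : SimpleGraph (Fin n) => G.comap ⇑e) ''
      {G : SimpleGraph (Fin n) | G.IsTree ∧ ∀ i, {j | G.Adj i j}.ncard = c i}
      = {G : SimpleGraph (Fin n) | G.IsTree ∧ ∀ i, {j | G.Adj i j}.ncard = c (e i)} := by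
    ext H
    simp only [Set.mem_image, Set.mem_setOf_eq]
    constructor
    · rintro ⟨G, ⟨hT, hd⟩, rfl⟩
      refine ⟨(comap_equiv_isTree_iff e).mpr hT, fun i => ?_⟩
      rw [ncard_nbr_comap_equiv e i, hd (e i)]
    · rintro ⟨hT, hd⟩
      refine ⟨H.comap ⇑e.symm, ⟨?_, fun i => ?_⟩, ?_⟩
      · exact (comap_equiv_isTree_iff e.symm).mpr hT
      · rw [ncard_nbr_comap_equiv e.symm i, hd (e.symm i)]
        congr 1
        exact e.apply_symm_apply i
      · ext x y
        show H.Adj (e.symm (e x)) (e.symm (e y)) ↔ H.Adj x y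
        rw [e.symm_apply_apply, e.symm_apply_apply]
  rw [← himg, Set.ncard_image_of_injective _ hinj]

end CayleyAux
open Finset SimpleGraph Fin

namespace CayleyAux

lemma unique_nbr {V : Type*} {G : SimpleGraph V} {v : V} (h : {z | G.Adj v z}.ncard = 1) :
    ∃ w, ∀ z, G.Adj v z ↔ z = w := by
  obtain ⟨w, hw⟩ := Set.ncard_eq_one.mp h
  exact ⟨w, fun z => by rw [← Set.mem_singleton_iff, ← hw]; rfl⟩

end CayleyAux

open Finset SimpleGraph Fin

namespace CayleyAux

section Step
variable {n : ℕ}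

lemma step_count (hn : 2 ≤ n)
    (IH : ∀ c : Fin n → ℕ, (∀ i, 1 ≤ c i) → ∑ i, c i = 2 * n - 2 →
      {G : SimpleGraph (Fin n) | G.IsTree ∧ ∀ i, {j | G.Adj i j}.ncard = c i}.ncard
        * ∏ i, Nat.factorial (c i - 1) = Nat.factorial (n - 2))
    (c : Fin (n + 1) → ℕ) (hc1 : ∀ i, 1 ≤ c i) (hcsum : ∑ i, c i = 2 * (n + 1) - 2)
    (hlast : c (Fin.last n) = 1) :
    {G : SimpleGraph (Fin (n + 1)) | G.IsTree ∧ ∀ i, {j | G.Adj i j}.ncard = c i}.ncard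
      * ∏ i, Nat.factorial (c i - 1) = Nat.factorial (n + 1 - 2) := by
  classical
  set S : Set (SimpleGraph (Fin (n + 1))) :=
    {G | G.IsTree ∧ ∀ i, {j | G.Adj i j}.ncard = c i} with hS
  set A : Fin n → Set (SimpleGraph (Fin (n + 1))) :=
    fun j => {G | G ∈ S ∧ G.Adj (Fin.last n) (Fin.castSucc j)} with hA
  set c' : Fin n → Fin n → ℕ :=
    fun j k => if k = j then c (Fin.castSucc k) - 1 else c (Fin.castSucc k) with hc'
  set B : Fin n → Set (SimpleGraph (Fin n)) :=
    fun j => {H | H.IsTree ∧ ∀ k, {m | H.Adj k m}.ncard = c' j k} with hB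
  -- each tree in S has a unique neighbor of `last`, of the form `castSucc j`
  have hGw : ∀ G ∈ S, ∃ j : Fin n, ∀ z, G.Adj (Fin.last n) z ↔ z = Fin.castSucc j := by
    intro G hG
    obtain ⟨w, hw⟩ := unique_nbr ((hG.2 (Fin.last n)).trans hlast)
    have hwne : w ≠ Fin.last n := ((hw w).mpr rfl).ne'
    exact ⟨w.castPred hwne, by simpa [Fin.castSucc_castPred] using hw⟩
  -- the partition
  have hn0 : 0 < n := by omega
  have hSfin : S.Finite := Set.toFinite _
  have hAfin : ∀ j, (A j).Finite := fun j => Set.toFinite _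
  set f : SimpleGraph (Fin (n + 1)) → Fin n := fun G =>
    if h : ∃ j : Fin n, G.Adj (Fin.last n) (Fin.castSucc j) then h.choose else ⟨0, hn0⟩ with hfdef
  have hf : ∀ G ∈ S, ∀ j, (f G = j ↔ G.Adj (Fin.last n) (Fin.castSucc j)) := by
    intro G hG j
    obtain ⟨j0, hj0⟩ := hGw G hG
    have hex : ∃ j : Fin n, G.Adj (Fin.last n) (Fin.castSucc j) := ⟨j0, (hj0 _).mpr rfl⟩
    have hfG : f G = j0 := by
      have hh := hex.choose_spec
      rw [hj0] at hh
      simp only [hfdef, dif_pos hex]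
      exact Fin.castSucc_injective n hh
    rw [hfG]
    constructor
    · rintro rfl; exact (hj0 _).mpr rfl
    · intro hadj
      exact (Fin.castSucc_injective n ((hj0 _).mp hadj)).symm
  have hpart : S.ncard = ∑ j : Fin n, (A j).ncard := by
    rw [Set.ncard_eq_toFinset_card _ hSfin,
      Finset.card_eq_sum_card_fiberwise (f := f) (t := Finset.univ) (fun x _ => Finset.mem_univ _)]
    refine Finset.sum_congr rfl fun j _ => ?_
    rw [Set.ncard_eq_toFinset_card _ (hAfin j)]
    congr 1
    ext G
    simp only [Finset.mem_filter, Set.Finite.mem_toFinset, hA, Set.mem_setOf_eq]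
    constructor
    · rintro ⟨hG, hfG⟩
      exact ⟨hG, (hf G hG j).mp hfG⟩
    · rintro ⟨hG, hadj⟩
      exact ⟨hG, (hf G hG j).mpr hadj⟩
  -- the bijection
  have hbij : ∀ j : Fin n, (A j).ncard = (B j).ncard := by
    intro j
    have himg : (fun G : SimpleGraph (Fin (n + 1)) =>
        G.comap (Fin.castSucc : Fin n → Fin (n + 1))) '' A j = B j := by
      ext H
      simp only [Set.mem_image, hA, hB, hS, Set.mem_setOf_eq]
      constructor
      · rintro ⟨G, ⟨⟨hT, hd⟩, hadj⟩, rfl⟩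
        obtain ⟨j0, hj0⟩ := hGw G ⟨hT, hd⟩
        obtain rfl : j = j0 := Fin.castSucc_injective n ((hj0 _).mp hadj)
        refine ⟨comap_isTree hn0 hT hj0, fun k => ?_⟩
        by_cases hkj : k = j
        · have hadj2 : G.Adj (Fin.castSucc k) (Fin.last n) := by
            rw [hkj]; exact hadj.symm
          have h2 := nbr_ncard_comap_of_adj_last hadj2
          rw [hd (Fin.castSucc k)] at h2
          simp only [hc', if_pos hkj]
          omega
        · have hnadj : ¬ G.Adj (Fin.castSucc k) (Fin.last n) := by
            intro hq
            exact hkj (Fin.castSucc_injective n ((hj0 _).mp hq.symm))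
          have h2 := nbr_ncard_comap_of_not_adj_last hnadj
          rw [hd (Fin.castSucc k)] at h2
          simp only [hc', if_neg hkj]
          omega
      · rintro ⟨hT, hd⟩
        refine ⟨addLeaf H j, ⟨⟨addLeaf_isTree hT j, fun i => ?_⟩,
          addLeaf_adj_last.mpr rfl⟩, addLeaf_comap H j⟩
        refine Fin.lastCases ?_ (fun k => ?_) i
        · have hset : {z | (addLeaf H j).Adj (Fin.last n) z} = {Fin.castSucc j} := by
            ext z
            simp only [Set.mem_setOf_eq, Set.mem_singleton_iff, addLeaf_adj_last]
          rw [hset, Set.ncard_singleton, hlast]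
        · by_cases hkj : k = j
          · have hadj2 : (addLeaf H j).Adj (Fin.castSucc k) (Fin.last n) := by
              rw [hkj]; exact (Adj.symm (addLeaf_adj_last.mpr rfl))
            have h2 := nbr_ncard_comap_of_adj_last hadj2
            rw [addLeaf_comap] at h2
            rw [h2, hd k]
            simp only [hc', if_pos hkj]
            have := hc1 (Fin.castSucc k)
            omega
          · have hnadj : ¬ (addLeaf H j).Adj (Fin.castSucc k) (Fin.last n) := by
              intro hq
              exact hkj (Fin.castSucc_injective n (addLeaf_adj_last.mp hq.symm))
            have h2 := nbr_ncard_comap_of_not_adj_last hnadj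
            rw [addLeaf_comap] at h2
            rw [h2, hd k]
            simp only [hc', if_neg hkj]
    have hinjOn : Set.InjOn (fun G : SimpleGraph (Fin (n + 1)) =>
        G.comap (Fin.castSucc : Fin n → Fin (n + 1))) (A j) := by
      rintro G1 hG1 G2 hG2 hcomap
      obtain ⟨j1, hj1⟩ := hGw G1 hG1.1
      obtain ⟨j2, hj2⟩ := hGw G2 hG2.1
      obtain rfl : j = j1 := Fin.castSucc_injective n ((hj1 _).mp hG1.2)
      obtain rfl : j = j2 := Fin.castSucc_injective n ((hj2 _).mp hG2.2)
      ext x y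
      rcases eq_or_ne x (Fin.last n) with rfl | hx
      · rcases eq_or_ne y (Fin.last n) with rfl | hy
        · simp
        · rw [hj1, hj2]
      · rcases eq_or_ne y (Fin.last n) with rfl | hy
        · rw [SimpleGraph.adj_comm, SimpleGraph.adj_comm G2, hj1, hj2]
        · have h3 := congrFun (congrFun (congrArg SimpleGraph.Adj hcomap)
            (x.castPred hx)) (y.castPred hy)
          simpa [SimpleGraph.comap, Fin.castSucc_castPred] using h3
    rw [← himg, Set.ncard_image_of_injOn hinjOn]
  -- emptiness for degree-1 attachment points
  have hcastsum : ∑ k : Fin n, c (Fin.castSucc k) = 2 * n - 1 := by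
    have h1 : ∑ i : Fin (n + 1), c i
        = ∑ k : Fin n, c (Fin.castSucc k) + c (Fin.last n) := Fin.sum_univ_castSucc c
    omega
  have hempty : ∀ j : Fin n, c (Fin.castSucc j) = 1 → (B j).ncard = 0 := by
    intro j h1
    rw [Set.ncard_eq_zero (Set.toFinite _), Set.eq_empty_iff_forall_notMem]
    rintro H ⟨hT, hd⟩
    have hd0 : {m | H.Adj j m}.ncard = 0 := by
      have := hd j
      simp only [hc', if_pos rfl, h1] at this
      simpa using this
    have hd0' : {m | H.Adj j m} = ∅ := (Set.ncard_eq_zero (Set.toFinite _)).mp hd0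
    set k : Fin n := if j = ⟨0, hn0⟩ then ⟨1, by omega⟩ else ⟨0, hn0⟩ with hk
    have hjk : j ≠ k := by
      rcases eq_or_ne j ⟨0, hn0⟩ with h | h
      · rw [hk, if_pos h, h]
        simp [Fin.ext_iff]
      · rw [hk, if_neg h]
        exact h
    obtain ⟨z, hz⟩ := exists_adj_of_reachable (hT.isConnected.preconnected j k) hjk
    exact Set.eq_empty_iff_forall_notMem.mp hd0' z hz
  have hperj : ∀ j : Fin n,
      (B j).ncard * ∏ k : Fin n, Nat.factorial (c (Fin.castSucc k) - 1)
        = (c (Fin.castSucc j) - 1) * Nat.factorial (n - 2) := by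
    intro j
    by_cases hcj : c (Fin.castSucc j) = 1
    · rw [hempty j hcj, hcj]
      simp
    · have hcj2 : 2 ≤ c (Fin.castSucc j) := by have := hc1 (Fin.castSucc j); omega
      have hge : ∀ k, 1 ≤ c' j k := by
        intro k
        simp only [hc']
        split
        · next h => rw [h]; omega
        · exact hc1 _
      have hsum' : ∑ k, c' j k = 2 * n - 2 := by
        have hupd : ∑ k, c' j k + 1 = ∑ k : Fin n, c (Fin.castSucc k) := by
          have h4 : ∑ k, c' j k + 1
              = (c (Fin.castSucc j) - 1) + ∑ k ∈ Finset.univ.erase j, c (Fin.castSucc k) + 1 := by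
            congr 1
            rw [← Finset.add_sum_erase _ _ (Finset.mem_univ j)]
            congr 1
            · simp only [hc', if_pos rfl]
            · refine Finset.sum_congr rfl fun k hk => ?_
              simp only [hc', if_neg (Finset.mem_erase.mp hk).1]
          have h5 : ∑ k : Fin n, c (Fin.castSucc k)
              = c (Fin.castSucc j) + ∑ k ∈ Finset.univ.erase j, c (Fin.castSucc k) :=
            (Finset.add_sum_erase _ _ (Finset.mem_univ j)).symm
          omega
        omega
      have hIH := IH (c' j) hge hsum'
      have hprodsplit : ∏ k : Fin n, Nat.factorial (c (Fin.castSucc k) - 1)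
          = (c (Fin.castSucc j) - 1) * ∏ k : Fin n, Nat.factorial (c' j k - 1) := by
        rw [← Finset.mul_prod_erase _ _ (Finset.mem_univ j),
          ← Finset.mul_prod_erase _ (fun k => Nat.factorial (c' j k - 1)) (Finset.mem_univ j)]
        have hfac : Nat.factorial (c (Fin.castSucc j) - 1)
            = (c (Fin.castSucc j) - 1) * Nat.factorial (c' j j - 1) := by
          obtain ⟨m, hm⟩ : ∃ m, c (Fin.castSucc j) = m + 2 := ⟨c (Fin.castSucc j) - 2, by omega⟩
          simp only [hc', if_pos rfl, hm]
          show Nat.factorial (m + 1) = (m + 2 - 1) * Nat.factorial (m + 1 - 1)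
          simp [Nat.factorial_succ]
        rw [hfac]
        have hrest : ∏ k ∈ Finset.univ.erase j, Nat.factorial (c (Fin.castSucc k) - 1)
            = ∏ k ∈ Finset.univ.erase j, Nat.factorial (c' j k - 1) := by
          refine Finset.prod_congr rfl fun k hk => ?_
          simp only [hc', if_neg (Finset.mem_erase.mp hk).1]
        rw [hrest]
        ring
      rw [hprodsplit, ← mul_assoc, mul_comm ((B j).ncard), mul_assoc, hIH]
  -- assemble
  have hprodall : ∏ i : Fin (n + 1), Nat.factorial (c i - 1)
      = ∏ k : Fin n, Nat.factorial (c (Fin.castSucc k) - 1) := by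
    rw [Fin.prod_univ_castSucc (fun i => Nat.factorial (c i - 1)), hlast]
    simp
  have hsumdeg : ∑ j : Fin n, (c (Fin.castSucc j) - 1) = n - 1 := by
    have h6 : ∑ j : Fin n, ((c (Fin.castSucc j) - 1) + 1) = ∑ j : Fin n, c (Fin.castSucc j) := by
      refine Finset.sum_congr rfl fun j _ => ?_
      have := hc1 (Fin.castSucc j)
      omega
    rw [Finset.sum_add_distrib] at h6
    simp only [Finset.sum_const, Finset.card_univ, Fintype.card_fin, smul_eq_mul, mul_one] at h6
    omega
  rw [hprodall, hpart, Finset.sum_mul]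
  have h7 : ∀ j ∈ Finset.univ, (A j).ncard * ∏ k : Fin n, Nat.factorial (c (Fin.castSucc k) - 1)
      = (c (Fin.castSucc j) - 1) * Nat.factorial (n - 2) := by
    intro j _
    rw [hbij j, hperj j]
  rw [Finset.sum_congr rfl h7, ← Finset.sum_mul, hsumdeg]
  obtain ⟨m, hm⟩ : ∃ m, n = m + 2 := ⟨n - 2, by omega⟩
  subst hm
  show (m + 1) * Nat.factorial (m + 2 - 2) = Nat.factorial (m + 2 + 1 - 2)
  simp [Nat.factorial_succ]

end Step
end CayleyAux

open Finset SimpleGraph Fin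

namespace CayleyAux

lemma top_isTree_fin2 : (⊤ : SimpleGraph (Fin 2)).IsTree := by
  constructor
  · constructor
    intro x y
    rcases eq_or_ne x y with rfl | h
    · exact Reachable.refl x
    · exact Adj.reachable (by simpa using h)
  · intro v p hp
    have h1 := hp.three_le_length
    have h2 : p.support.tail.Nodup := hp.support_nodup
    have h3 := h2.length_le_card
    have h4 := p.length_support
    simp only [Fintype.card_fin] at h3
    have h5 : p.support.tail.length = p.support.length - 1 := by
      cases p.support with
      | nil => simp
      | cons a l => simp
    omega

lemma base_case (c : Fin 2 → ℕ) (hc1 : ∀ i, 1 ≤ c i) (hcsum : ∑ i, c i = 2 * 2 - 2) :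
    {G : SimpleGraph (Fin 2) | G.IsTree ∧ ∀ i, {j | G.Adj i j}.ncard = c i}.ncard
      * ∏ i, Nat.factorial (c i - 1) = Nat.factorial (2 - 2) := by
  have hc : ∀ i, c i = 1 := by
    rw [Fin.sum_univ_two] at hcsum
    intro i
    have h0 := hc1 0
    have h1 := hc1 1
    fin_cases i <;> simp only [Fin.mk_zero, Fin.mk_one] <;> omega
  have hdeg : ∀ i : Fin 2, {j | (⊤ : SimpleGraph (Fin 2)).Adj i j}.ncard = 1 := by
    intro i
    rw [Set.ncard_eq_one]
    fin_cases i
    · exact ⟨1, by ext z; fin_cases z <;> simp⟩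
    · exact ⟨0, by ext z; fin_cases z <;> simp⟩
  have hset : {G : SimpleGraph (Fin 2) | G.IsTree ∧ ∀ i, {j | G.Adj i j}.ncard = c i}
      = {(⊤ : SimpleGraph (Fin 2))} := by
    ext G
    simp only [Set.mem_setOf_eq, Set.mem_singleton_iff]
    constructor
    · rintro ⟨hT, hd⟩
      have h01 : (0 : Fin 2) ≠ 1 := by decide
      obtain ⟨z, hz⟩ := exists_adj_of_reachable (hT.isConnected.preconnected 0 1) h01
      have hz0 : z ≠ 0 := hz.ne'
      have hz1 : z = 1 := by fin_cases z <;> simp_all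
      subst hz1
      ext x y
      simp only [top_adj]
      constructor
      · exact fun h => h.ne
      · intro hxy
        fin_cases x <;> fin_cases y <;> first
          | exact absurd rfl hxy
          | exact hz
          | exact hz.symm
    · rintro rfl
      exact ⟨top_isTree_fin2, fun i => by rw [hdeg i, hc i]⟩
  rw [hset, Set.ncard_singleton]
  have : ∀ i : Fin 2, Nat.factorial (c i - 1) = 1 := fun i => by rw [hc i]; rfl
  rw [Finset.prod_congr rfl (fun i _ => this i)]
  simp

lemma main_count : ∀ n : ℕ, 2 ≤ n → ∀ c : Fin n → ℕ, (∀ i, 1 ≤ c i) →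
    ∑ i, c i = 2 * n - 2 →
    {G : SimpleGraph (Fin n) | G.IsTree ∧ ∀ i, {j | G.Adj i j}.ncard = c i}.ncard
      * ∏ i, Nat.factorial (c i - 1) = Nat.factorial (n - 2) := by
  intro n hn
  induction n, hn using Nat.le_induction with
  | base => exact base_case
  | succ n hn IH =>
    intro c hc1 hcsum
    have hex : ∃ i, c i = 1 := by
      by_contra hno
      push_neg at hno
      have h2 : ∀ i ∈ Finset.univ, 2 ≤ c i := fun i _ => by
        have := hc1 i; have := hno i; omega
      have hge := Finset.sum_le_sum h2
      simp only [Finset.sum_const, Finset.card_univ, Fintype.card_fin, smul_eq_mul] at hge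
      omega
    obtain ⟨i0, hi0⟩ := hex
    set e : Fin (n + 1) ≃ Fin (n + 1) := Equiv.swap i0 (Fin.last n) with he
    have hperm := ncard_trees_perm e c
    have hprod' : ∏ i, Nat.factorial (c (e i) - 1) = ∏ i, Nat.factorial (c i - 1) :=
      Equiv.prod_comp e (fun i => Nat.factorial (c i - 1))
    rw [← hperm, ← hprod']
    have hlast' : c (e (Fin.last n)) = 1 := by
      rw [he, Equiv.swap_apply_right, hi0]
    have hsum' : ∑ i, c (e i) = 2 * (n + 1) - 2 := by
      rw [Equiv.sum_comp e c]; exact hcsum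
    exact step_count hn IH (fun i => c (e i)) (fun i => hc1 _) hsum' hlast'

end CayleyAux

open CayleyAux in
/-- Cayley's formula with prescribed degrees: the number of labeled trees on
`{1,...,n}` in which vertex `i` has degree `c i` is `(n-2)! / ∏ (c i - 1)!`. -/
theorem cayley_degree_sequence (n : ℕ) (hn : 2 ≤ n) (c : Fin n → ℕ)
    (hc1 : ∀ i, 1 ≤ c i) (hcsum : ∑ i, c i = 2 * n - 2) :
    {G : SimpleGraph (Fin n) | G.IsTree ∧ ∀ i, {j | G.Adj i j}.ncard = c i}.ncard
      * ∏ i, Nat.factorial (c i - 1) = Nat.factorial (n - 2) :=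
  main_count n hn c hc1 hcsum
end

section
/- For every integer n ≥ 2, 2·√((4n-4)!!) · (3n-3)!/(2n-1)! ≤ (n-1)! · 3^{3n} · e^{-n} · n^n. -/
open Nat

lemma pow_le_exp_pow_mul_factorial (k : ℕ) :
    (k : ℝ) ^ k ≤ Real.exp 1 ^ k * k ! := by
  induction k with
  | zero => simp
  | succ k ih =>
    have hk : ((k : ℝ) + 1) ^ k ≤ Real.exp 1 * (k : ℝ) ^ k := by
      rcases Nat.eq_zero_or_pos k with h | h
      · subst h; simpa using Real.one_le_exp (le_refl 1) |>.le
      · have hk0 : (0 : ℝ) < k := by exact_mod_cast h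
        have h1 : (k : ℝ) + 1 ≤ k * Real.exp (1 / k) := by
          have h2 := Real.add_one_le_exp (1 / (k : ℝ))
          have h3 : (k : ℝ) * (1 / k + 1) = k + 1 := by field_simp; ring
          calc (k : ℝ) + 1 = k * (1 / k + 1) := h3.symm
            _ ≤ k * Real.exp (1 / k) := mul_le_mul_of_nonneg_left h2 hk0.le
        calc ((k : ℝ) + 1) ^ k ≤ ((k : ℝ) * Real.exp (1 / k)) ^ k :=
              pow_le_pow_left₀ (by positivity) h1 k
          _ = (k : ℝ) ^ k * Real.exp (1 / k) ^ k := mul_pow _ _ _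
          _ = (k : ℝ) ^ k * Real.exp (k * (1 / k)) := by rw [Real.exp_nat_mul]
          _ = Real.exp 1 * (k : ℝ) ^ k := by
              rw [mul_one_div, div_self (ne_of_gt hk0)]; ring
    have hE : (0 : ℝ) < Real.exp 1 := Real.exp_pos 1
    have hkk : (0 : ℝ) ≤ (k : ℝ) ^ k := by positivity
    rw [Nat.factorial_succ]
    push_cast
    calc ((k : ℝ) + 1) ^ (k + 1) = ((k : ℝ) + 1) ^ k * ((k : ℝ) + 1) := pow_succ _ _
      _ ≤ (Real.exp 1 * (k : ℝ) ^ k) * ((k : ℝ) + 1) := by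
          apply mul_le_mul_of_nonneg_right hk (by positivity)
      _ ≤ (Real.exp 1 * (Real.exp 1 ^ k * k !)) * ((k : ℝ) + 1) := by
          apply mul_le_mul_of_nonneg_right _ (by positivity)
          exact mul_le_mul_of_nonneg_left ih hE.le
      _ = Real.exp 1 ^ (k + 1) * ((k + 1) * k !) := by ring

lemma factorial_mul_exp_pow_le (k : ℕ) (hk : 1 ≤ k) :
    (k ! : ℝ) * Real.exp 1 ^ k ≤ Real.exp 1 * k * (k : ℝ) ^ k := by
  induction k with
  | zero => omega
  | succ k ih =>
    rcases Nat.eq_zero_or_pos k with h | h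
    · subst h; simp
    · have ih' := ih h
      have hk0 : (0 : ℝ) < k := by exact_mod_cast h
      have hE : (0 : ℝ) < Real.exp 1 := Real.exp_pos 1
      have key : Real.exp 1 * (k : ℝ) ^ (k + 1) ≤ ((k : ℝ) + 1) ^ (k + 1) := by
        have h2 : 1 - 1 / ((k : ℝ) + 1) ≤ Real.exp (-(1 / ((k : ℝ) + 1))) := by
          have := Real.add_one_le_exp (-(1 / ((k : ℝ) + 1)))
          linarith
        have h3 : ((k : ℝ) + 1) * (1 - 1 / ((k : ℝ) + 1)) = k := by field_simp; ring
        have h1 : (k : ℝ) ≤ ((k : ℝ) + 1) * Real.exp (-(1 / ((k : ℝ) + 1))) :=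
          calc (k : ℝ) = ((k : ℝ) + 1) * (1 - 1 / ((k : ℝ) + 1)) := h3.symm
            _ ≤ _ := mul_le_mul_of_nonneg_left h2 (by positivity)
        have h4 : (k : ℝ) ^ (k + 1) ≤
            (((k : ℝ) + 1) * Real.exp (-(1 / ((k : ℝ) + 1)))) ^ (k + 1) :=
          pow_le_pow_left₀ hk0.le h1 _
        have h5 : Real.exp (-(1 / ((k : ℝ) + 1))) ^ (k + 1) = Real.exp (-1) := by
          rw [← Real.exp_nat_mul]
          congr 1
          push_cast
          field_simp
        rw [mul_pow, h5, Real.exp_neg] at h4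
        calc Real.exp 1 * (k : ℝ) ^ (k + 1)
            ≤ Real.exp 1 * (((k : ℝ) + 1) ^ (k + 1) * (Real.exp 1)⁻¹) := by
              exact mul_le_mul_of_nonneg_left h4 hE.le
          _ = ((k : ℝ) + 1) ^ (k + 1) := by field_simp
      rw [Nat.factorial_succ]
      push_cast
      calc ((k : ℝ) + 1) * (k !) * Real.exp 1 ^ (k + 1)
          = (((k !) : ℝ) * Real.exp 1 ^ k) * (((k : ℝ) + 1) * Real.exp 1) := by ring
        _ ≤ (Real.exp 1 * k * (k : ℝ) ^ k) * (((k : ℝ) + 1) * Real.exp 1) := by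
            apply mul_le_mul_of_nonneg_right ih' (by positivity)
        _ = (Real.exp 1 * (k : ℝ) ^ (k + 1)) * (Real.exp 1 * ((k : ℝ) + 1)) := by ring
        _ ≤ ((k : ℝ) + 1) ^ (k + 1) * (Real.exp 1 * ((k : ℝ) + 1)) := by
            apply mul_le_mul_of_nonneg_right key (by positivity)
        _ = Real.exp 1 * ((k : ℝ) + 1) * ((k : ℝ) + 1) ^ (k + 1) := by ring

/-- `2√((4n-4)‼) (3n-3)!/(2n-1)! ≤ (n-1)! 3^{3n} e^{-n} n^n`. -/
theorem stirling_combinatorial_bound (n : ℕ) (hn : 2 ≤ n) :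
    2 * Real.sqrt ((4 * n - 4)‼) * (Nat.factorial (3 * n - 3)) / (Nat.factorial (2 * n - 1))
      ≤ (Nat.factorial (n - 1)) * 3 ^ (3 * n) * Real.exp (-(n : ℝ)) * (n : ℝ) ^ n := by
  obtain ⟨m, rfl⟩ : ∃ m, n = m + 1 := ⟨n - 1, by omega⟩
  have hm : 1 ≤ m := by omega
  have e1 : 4 * (m + 1) - 4 = 2 * (2 * m) := by omega
  have e2 : 3 * (m + 1) - 3 = 3 * m := by omega
  have e3 : 2 * (m + 1) - 1 = 2 * m + 1 := by omega
  have e4 : (m + 1) - 1 = m := by omega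
  rw [e1, e2, e3, e4, Nat.doubleFactorial_two_mul, Nat.factorial_succ]
  push_cast
  set E := Real.exp 1 with hEdef
  have hE0 : (0 : ℝ) < E := Real.exp_pos 1
  have hE2 : E ≤ 2.7182818286 := Real.exp_one_lt_d9.le
  have hm1 : (1 : ℝ) ≤ (m : ℝ) := by exact_mod_cast hm
  have hF2 : (0 : ℝ) < ((2 * m)! : ℝ) := by exact_mod_cast (2 * m).factorial_pos
  have hF3 : (0 : ℝ) < ((3 * m)! : ℝ) := by exact_mod_cast (3 * m).factorial_pos
  have hFm0 : (0 : ℝ) < (m ! : ℝ) := by exact_mod_cast m.factorial_pos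
  have hs0 : 0 < Real.sqrt ((2 * m)! : ℝ) := Real.sqrt_pos.mpr hF2
  have hs2 : Real.sqrt ((2 * m)! : ℝ) ^ 2 = ((2 * m)! : ℝ) := Real.sq_sqrt hF2.le
  have hx0 : (0 : ℝ) < (m : ℝ) ^ m := by positivity
  -- sqrt of the double factorial
  have hsqrt : Real.sqrt ((2 : ℝ) ^ (2 * m) * ((2 * m)! : ℝ))
      = (2 : ℝ) ^ m * Real.sqrt ((2 * m)! : ℝ) := by
    rw [show ((2 : ℝ) ^ (2 * m)) = ((2 : ℝ) ^ m) ^ 2 by rw [← pow_mul, mul_comm],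
      Real.sqrt_mul (by positivity), Real.sqrt_sq (by positivity)]
  -- lower bound for the square root
  have hA : (2 : ℝ) ^ m * (m : ℝ) ^ m ≤ E ^ m * Real.sqrt ((2 * m)! : ℝ) := by
    have h1 := pow_le_exp_pow_mul_factorial (2 * m)
    push_cast at h1
    have h2 : ((2 : ℝ) ^ m * (m : ℝ) ^ m) ^ 2 ≤ (E ^ m * Real.sqrt ((2 * m)! : ℝ)) ^ 2 := by
      rw [mul_pow, mul_pow, hs2, ← pow_mul, ← pow_mul, ← pow_mul, mul_comm m 2]
      calc (2 : ℝ) ^ (2 * m) * (m : ℝ) ^ (2 * m) = (2 * (m : ℝ)) ^ (2 * m) := (mul_pow _ _ _).symm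
        _ ≤ E ^ (2 * m) * ((2 * m)! : ℝ) := h1
    nlinarith [h2, mul_pos (pow_pos hE0 m) hs0, mul_pos (pow_pos (by norm_num : (0:ℝ) < 2) m) hx0]
  -- upper bound for (3m)!
  have hB : ((3 * m)! : ℝ) * (E ^ m) ^ 3 ≤ 3 * E * m * ((27 : ℝ) ^ m * ((m : ℝ) ^ m) ^ 3) := by
    have h1 := factorial_mul_exp_pow_le (3 * m) (by omega)
    push_cast at h1
    have e5 : E ^ (3 * m) = (E ^ m) ^ 3 := by rw [mul_comm, pow_mul]
    have e6 : (3 * (m : ℝ)) ^ (3 * m) = (27 : ℝ) ^ m * ((m : ℝ) ^ m) ^ 3 := by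
      rw [mul_pow, show (3:ℝ) ^ (3 * m) = ((3:ℝ)^3)^m by rw [pow_mul],
        show ((m : ℝ)) ^ (3 * m) = ((m:ℝ)^m)^3 by rw [mul_comm, pow_mul]]
      norm_num
    rw [e5, e6] at h1
    calc ((3 * m)! : ℝ) * (E ^ m) ^ 3 ≤ E * (3 * m) * ((27 : ℝ) ^ m * ((m : ℝ) ^ m) ^ 3) := h1
      _ = 3 * E * m * ((27 : ℝ) ^ m * ((m : ℝ) ^ m) ^ 3) := by ring
  -- lower bound for m!
  have hFm : (m : ℝ) ^ m ≤ E ^ m * (m ! : ℝ) := pow_le_exp_pow_mul_factorial m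
  -- rewrite exp and 3-powers
  have hexp : Real.exp (-((m : ℝ) + 1)) = (E ^ m * E)⁻¹ := by
    rw [Real.exp_neg]
    congr 1
    rw [show ((m : ℝ) + 1) = ((m + 1 : ℕ) : ℝ) * 1 by push_cast; ring, Real.exp_nat_mul, ← hEdef,
      pow_succ]
  have h27 : (3 : ℝ) ^ (3 * (m + 1)) = 27 * (27 : ℝ) ^ m := by
    rw [pow_mul]
    norm_num [pow_succ, mul_comm]
  have hP : 2 * (m : ℝ) ^ m ≤ ((m : ℝ) + 1) ^ (m + 1) := by
    have h1 : (m : ℝ) ^ m ≤ ((m : ℝ) + 1) ^ m := pow_le_pow_left₀ (by positivity) (by linarith) m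
    calc 2 * (m : ℝ) ^ m = (m : ℝ) ^ m * 2 := by ring
      _ ≤ ((m : ℝ) + 1) ^ m * ((m : ℝ) + 1) :=
          mul_le_mul h1 (by linarith) (by norm_num) (by positivity)
      _ = ((m : ℝ) + 1) ^ (m + 1) := (pow_succ _ _).symm
  have h3E : 3 * E * E ≤ 54 := by nlinarith [hE0.le]
  rw [hsqrt, h27, hexp]
  have step1 : 2 * ((2:ℝ) ^ m * Real.sqrt ((2 * m)! : ℝ)) * ((3 * m)! : ℝ)
      / ((2 * (m:ℝ) + 1) * ((2 * m)! : ℝ))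
      ≤ 3 * E * (27:ℝ) ^ m * ((m:ℝ) ^ m) ^ 2 / (E ^ m) ^ 2 := by
    rw [div_le_div_iff₀ (mul_pos (by positivity) hF2) (by positivity)]
    apply (mul_le_mul_iff_of_pos_right (pow_pos hE0 m)).mp
    calc 2 * ((2:ℝ) ^ m * Real.sqrt ((2 * m)! : ℝ)) * ((3 * m)! : ℝ) * (E ^ m) ^ 2 * E ^ m
        = 2 * (2:ℝ) ^ m * Real.sqrt ((2 * m)! : ℝ) * (((3 * m)! : ℝ) * (E ^ m) ^ 3) := by ring
      _ ≤ 2 * (2:ℝ) ^ m * Real.sqrt ((2 * m)! : ℝ)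
            * (3 * E * m * ((27 : ℝ) ^ m * ((m : ℝ) ^ m) ^ 3)) :=
          mul_le_mul_of_nonneg_left hB (by positivity)
      _ = (6 * E * m * (27:ℝ) ^ m * ((m:ℝ) ^ m) ^ 2 * Real.sqrt ((2 * m)! : ℝ))
            * ((2:ℝ) ^ m * (m : ℝ) ^ m) := by ring
      _ ≤ (6 * E * m * (27:ℝ) ^ m * ((m:ℝ) ^ m) ^ 2 * Real.sqrt ((2 * m)! : ℝ))
            * (E ^ m * Real.sqrt ((2 * m)! : ℝ)) :=
          mul_le_mul_of_nonneg_left hA (by positivity)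
      _ = (6 * (m:ℝ)) * (E * (27:ℝ) ^ m * ((m:ℝ) ^ m) ^ 2 * E ^ m
            * (Real.sqrt ((2 * m)! : ℝ) ^ 2)) := by ring
      _ = (6 * (m:ℝ)) * (E * (27:ℝ) ^ m * ((m:ℝ) ^ m) ^ 2 * E ^ m * ((2 * m)! : ℝ)) := by
          rw [hs2]
      _ ≤ (3 * (2 * (m:ℝ) + 1)) * (E * (27:ℝ) ^ m * ((m:ℝ) ^ m) ^ 2 * E ^ m * ((2 * m)! : ℝ)) :=
          mul_le_mul_of_nonneg_right (by linarith) (by positivity)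
      _ = 3 * E * (27:ℝ) ^ m * ((m:ℝ) ^ m) ^ 2 * ((2 * (m:ℝ) + 1) * ((2 * m)! : ℝ)) * E ^ m := by
          ring
  have step2 : 3 * E * (27:ℝ) ^ m * ((m:ℝ) ^ m) ^ 2 / (E ^ m) ^ 2
      ≤ (m ! : ℝ) * (27 * (27:ℝ) ^ m) * (E ^ m * E)⁻¹ * ((m:ℝ) + 1) ^ (m + 1) := by
    have hre : (m ! : ℝ) * (27 * (27:ℝ) ^ m) * (E ^ m * E)⁻¹ * ((m:ℝ) + 1) ^ (m + 1)
        = (m ! : ℝ) * (27 * (27:ℝ) ^ m) * ((m:ℝ) + 1) ^ (m + 1) / (E ^ m * E) := by ring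
    rw [hre, div_le_div_iff₀ (by positivity) (by positivity)]
    calc 3 * E * (27:ℝ) ^ m * ((m:ℝ) ^ m) ^ 2 * (E ^ m * E)
        = (3 * E * E) * ((27:ℝ) ^ m * ((m:ℝ) ^ m) ^ 2 * E ^ m) := by ring
      _ ≤ 54 * ((27:ℝ) ^ m * ((m:ℝ) ^ m) ^ 2 * E ^ m) :=
          mul_le_mul_of_nonneg_right h3E (by positivity)
      _ = (2 * (m:ℝ) ^ m) * (27 * (27:ℝ) ^ m * (m:ℝ) ^ m * E ^ m) := by ring
      _ ≤ (((m:ℝ) + 1) ^ (m + 1)) * (27 * (27:ℝ) ^ m * (m:ℝ) ^ m * E ^ m) :=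
          mul_le_mul_of_nonneg_right hP (by positivity)
      _ = ((m:ℝ) ^ m) * (27 * (27:ℝ) ^ m * ((m:ℝ) + 1) ^ (m + 1) * E ^ m) := by ring
      _ ≤ (E ^ m * (m ! : ℝ)) * (27 * (27:ℝ) ^ m * ((m:ℝ) + 1) ^ (m + 1) * E ^ m) :=
          mul_le_mul_of_nonneg_right hFm (by positivity)
      _ = (m ! : ℝ) * (27 * (27:ℝ) ^ m) * ((m:ℝ) + 1) ^ (m + 1) * (E ^ m) ^ 2 := by ring
  exact le_trans step1 step2
end
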